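/- Let V : ℝⁿ → ℝ be continuous, positive semidefinite and radially unbounded. Let x : ℕ → ℝⁿ, y : ℕ → ℝᵐ be discrete-time state and output sequences, let ρ, α, κ, B₂ > 0, N₀ ∈ ℕ with N₀ ≥ 1, and let k ∈ ℕ be the initial time step. Assume: (a) V(x[i+1]) − V(x[i]) ≤ −ρ‖y[i]‖₂² + α for all i ≥ k; (b) the strong finite-time detectability inequality Σ_{i=s}^{s+N₀−1} ‖y[i]‖₂² ≥ κ‖x[s]‖₂² holds for all s ≥ k; (c) ‖x[k]‖₂ ≤ B₂. Then there exists D > 0 such that ‖x[s]‖₂ ≤ D for all s ≥ k. -/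

import Mathlib

/-- Ultimate boundedness of a strongly finite-time detectable discrete-time system
whose storage function decreases up to `-ρ‖y‖² + α`. -/
theorem stmt_1 {n m : ℕ} (V : EuclideanSpace ℝ (Fin n) → ℝ)
    (hVcont : Continuous V) (hVpos : ∀ z, 0 ≤ V z)
    (hVrad : ∀ M : ℝ, ∃ r : ℝ, ∀ z, r ≤ ‖z‖ → M ≤ V z)
    (x : ℕ → EuclideanSpace ℝ (Fin n)) (y : ℕ → EuclideanSpace ℝ (Fin m))
    (ρ α κ B₂ : ℝ) (hρ : 0 < ρ) (hα : 0 < α) (hκ : 0 < κ) (hB₂ : 0 < B₂)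
    (N₀ : ℕ) (hN₀ : 1 ≤ N₀) (k : ℕ)
    (hdiss : ∀ i, k ≤ i → V (x (i + 1)) - V (x i) ≤ -ρ * ‖y i‖ ^ 2 + α)
    (hdet : ∀ s, k ≤ s → κ * ‖x s‖ ^ 2 ≤ ∑ i ∈ Finset.range N₀, ‖y (s + i)‖ ^ 2)
    (hx : ‖x k‖ ≤ B₂) :
    ∃ D > 0, ∀ s, k ≤ s → ‖x s‖ ≤ D := by
  -- window estimate
  have hwin : ∀ s, k ≤ s → ∀ j : ℕ,
      V (x (s + j)) ≤ V (x s) - ρ * ∑ i ∈ Finset.range j, ‖y (s + i)‖ ^ 2 + j * α := by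
    intro s hs j
    induction j with
    | zero => simp
    | succ j ih =>
      have h1 := hdiss (s + j) (le_trans hs (Nat.le_add_right _ _))
      have : V (x (s + j + 1)) ≤ V (x (s + j)) + (-ρ * ‖y (s + j)‖ ^ 2 + α) := by linarith
      rw [Finset.sum_range_succ]
      push_cast
      have hsj : s + (j + 1) = s + j + 1 := by ring
      rw [hsj]
      nlinarith [this, ih]
  -- crude estimate
  have hcrude : ∀ s, k ≤ s → ∀ j : ℕ, V (x (s + j)) ≤ V (x s) + j * α := by
    intro s hs j
    have h := hwin s hs j
    have hsum : (0:ℝ) ≤ ∑ i ∈ Finset.range j, ‖y (s + i)‖ ^ 2 :=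
      Finset.sum_nonneg fun i _ => sq_nonneg _
    nlinarith
  -- decrease estimate over a window
  have hdec : ∀ s, k ≤ s → V (x (s + N₀)) ≤ V (x s) - ρ * κ * ‖x s‖ ^ 2 + N₀ * α := by
    intro s hs
    have h := hwin s hs N₀
    have h2 := hdet s hs
    nlinarith
  -- threshold radius
  set c : ℝ := N₀ * α / (ρ * κ) with hc
  have hcpos : 0 < c := by
    apply div_pos
    · have : (0:ℝ) < N₀ := by exact_mod_cast hN₀
      positivity
    · positivity
  set r₀ : ℝ := Real.sqrt c with hr₀
  -- V bounded on the ball of radius r₀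
  obtain ⟨z₀, hz₀, hmax⟩ :=
    (isCompact_closedBall (0 : EuclideanSpace ℝ (Fin n)) r₀).exists_isMaxOn
      ⟨0, Metric.mem_closedBall_self (Real.sqrt_nonneg _)⟩ hVcont.continuousOn
  set M₁ : ℝ := V z₀ with hM₁
  have hball : ∀ z : EuclideanSpace ℝ (Fin n), ‖z‖ ≤ r₀ → V z ≤ M₁ := by
    intro z hz
    exact hmax (by simpa [Metric.mem_closedBall] using hz)
  set M : ℝ := max (V (x k)) M₁ + N₀ * α with hM
  -- main bound on V
  have key : ∀ d : ℕ, V (x (k + d)) ≤ M := by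
    intro d
    induction d using Nat.strong_induction_on with
    | _ d ih =>
      by_cases hd : d < N₀
      · have h := hcrude k le_rfl d
        have : (d:ℝ) * α ≤ N₀ * α := by
          have : (d:ℝ) ≤ N₀ := by exact_mod_cast hd.le
          nlinarith
        have : V (x (k + d)) ≤ V (x k) + N₀ * α := by linarith
        have h2 : V (x k) ≤ max (V (x k)) M₁ := le_max_left _ _
        simp only [hM]; linarith
      · push_neg at hd
        obtain ⟨t, rfl⟩ := Nat.exists_eq_add_of_le hd
        have hkt : k ≤ k + t := Nat.le_add_right _ _
        have heq : k + (N₀ + t) = (k + t) + N₀ := by ring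
        rw [heq]
        have hih : V (x (k + t)) ≤ M := ih t (by omega)
        by_cases hxt : ‖x (k + t)‖ ≤ r₀
        · have h := hcrude (k + t) hkt N₀
          have hb := hball _ hxt
          have h2 : M₁ ≤ max (V (x k)) M₁ := le_max_right _ _
          simp only [hM]; linarith
        · push_neg at hxt
          have h := hdec (k + t) hkt
          have hr0nn : 0 ≤ r₀ := Real.sqrt_nonneg _
          have hsq : c ≤ ‖x (k + t)‖ ^ 2 := by
            have := Real.sq_sqrt hcpos.le
            nlinarith
          have hca : ρ * κ * c = N₀ * α := by
            rw [hc]; field_simp [hρ.ne', hκ.ne']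
          have : (N₀:ℝ) * α ≤ ρ * κ * ‖x (k + t)‖ ^ 2 := by
            nlinarith [mul_pos hρ hκ, hsq, hca]
          linarith
  -- conclude via radial unboundedness
  obtain ⟨r, hr⟩ := hVrad (M + 1)
  refine ⟨max r 1, lt_of_lt_of_le one_pos (le_max_right _ _), ?_⟩
  intro s hs
  obtain ⟨d, rfl⟩ := Nat.exists_eq_add_of_le hs
  have hV := key d
  have hlt : ‖x (k + d)‖ < r := by
    by_contra hge
    push_neg at hge
    have := hr _ hge
    linarith
  exact le_trans hlt.le (le_max_left _ _)
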